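/- Let p be a prime, let N ≥ 1 be an integer, let A be an N×N matrix with entries in ℚ_p, and let f : {1,…,N} → ℝ_{≥0} be a function such that ‖A_{ij}‖_p ≤ p^{−f(i)} for all i, j. For 0 ≤ n ≤ N, let c_n ∈ ℚ_p be the coefficient of T^n in the reverse characteristic polynomial det(1 − T·A) ∈ ℚ_p[T], and let S_n denote the minimum of Σ_{i ∈ I} f(i) over all n-element subsets I of {1,…,N} (equivalently, the sum of the n smallest values of f counted with multiplicity). Then ‖c_n‖_p ≤ p^{−S_n} for every 0 ≤ n ≤ N. -/

import Mathlib

open Finset Polynomial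

lemma poly_coeff_prod {R : Type*} [CommSemiring R] {ι : Type*} [DecidableEq ι]
    (s : Finset ι) (g : ι → R[X]) (d : ℕ) :
    (∏ i ∈ s, g i).coeff d = ∑ l ∈ Finset.finsuppAntidiag s d, ∏ i ∈ s, (g i).coeff (l i) := by
  have hco : ((∏ i ∈ s, g i : R[X]) : PowerSeries R) = ∏ i ∈ s, ((g i : R[X]) : PowerSeries R) :=
    map_prod (Polynomial.coeToPowerSeries.ringHom (R := R)) g s
  have h := PowerSeries.coeff_prod (fun i => ((g i : R[X]) : PowerSeries R)) d s
  rw [← hco] at h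
  simpa using h

theorem stmt9 (p : ℕ) [Fact p.Prime] (N : ℕ) (hN : 1 ≤ N)
    (A : Matrix (Fin N) (Fin N) ℚ_[p]) (f : Fin N → ℝ) (hf : ∀ i, 0 ≤ f i)
    (hA : ∀ i j, ‖A i j‖ ≤ (p : ℝ) ^ (-f i)) :
    ∀ n ≤ N,
      ‖(Matrix.det ((1 : Matrix (Fin N) (Fin N) (Polynomial ℚ_[p])) -
            (Polynomial.X : Polynomial ℚ_[p]) • A.map (Polynomial.C : ℚ_[p] →+* Polynomial ℚ_[p]))).coeff n‖ ≤
        (p : ℝ) ^ (-sInf {x : ℝ | ∃ I : Finset (Fin N), I.card = n ∧ x = ∑ i ∈ I, f i}) := by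
  intro n hn
  set M : Matrix (Fin N) (Fin N) (Polynomial ℚ_[p]) :=
    (1 : Matrix (Fin N) (Fin N) (Polynomial ℚ_[p])) -
      (Polynomial.X : Polynomial ℚ_[p]) • A.map (Polynomial.C : ℚ_[p] →+* Polynomial ℚ_[p]) with hM
  set S : ℝ := sInf {x : ℝ | ∃ I : Finset (Fin N), I.card = n ∧ x = ∑ i ∈ I, f i} with hS
  have hp1 : (1 : ℝ) < p := by exact_mod_cast (Fact.out (p := p.Prime)).one_lt
  have hp0 : (0 : ℝ) < p := lt_trans one_pos hp1
  have hSle : ∀ I : Finset (Fin N), I.card = n → S ≤ ∑ i ∈ I, f i := by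
    intro I hI
    refine csInf_le ⟨0, ?_⟩ ⟨I, hI, rfl⟩
    rintro x ⟨J, hJ, rfl⟩
    exact Finset.sum_nonneg fun i _ => hf i
  have hpowS : (0 : ℝ) ≤ (p : ℝ) ^ (-S) := (Real.rpow_pos_of_pos hp0 _).le
  -- bound on coefficients of entries
  have hentry : ∀ a b : Fin N, ∀ k : ℕ,
      ‖(M a b).coeff k‖ ≤ if k = 0 then 1 else if k = 1 then (p : ℝ) ^ (-f a) else 0 := by
    intro a b k
    have hMab : M a b = (if a = b then 1 else 0) - Polynomial.X * Polynomial.C (A a b) := by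
      simp [hM, Matrix.sub_apply, Matrix.one_apply, Matrix.smul_apply, Matrix.map_apply,
        smul_eq_mul]
    rw [hMab]
    match k with
    | 0 =>
      simp only [Polynomial.coeff_sub, if_pos rfl]
      split <;> simp
    | 1 =>
      have : (Polynomial.X * Polynomial.C (A a b)).coeff 1 = A a b := by
        simp [Polynomial.coeff_X_mul]
      simp only [Polynomial.coeff_sub, this]
      split <;> simp [Polynomial.coeff_one, hA a b]
    | (k+2) =>
      have h1 : (Polynomial.X * Polynomial.C (A a b)).coeff (k+2) = 0 := by
        rw [Polynomial.coeff_X_mul]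
        simp [Polynomial.coeff_C]
      have h2 : ((if a = b then 1 else 0 : Polynomial ℚ_[p])).coeff (k+2) = 0 := by
        split <;> simp [Polynomial.coeff_one]
      simp [Polynomial.coeff_sub, h1, h2]
  -- bound per permutation
  have hperm : ∀ σ : Equiv.Perm (Fin N),
      ‖(∏ i, M (σ i) i).coeff n‖ ≤ (p : ℝ) ^ (-S) := by
    intro σ
    rw [poly_coeff_prod]
    refine IsUltrametricDist.norm_sum_le_of_forall_le_of_nonneg hpowS ?_
    intro l hl
    rw [Finset.mem_finsuppAntidiag] at hl
    obtain ⟨hlsum, -⟩ := hl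
    rw [norm_prod]
    have hstep : ∏ i, ‖(M (σ i) i).coeff (l i)‖ ≤
        ∏ i, (if l i = 0 then 1 else if l i = 1 then (p : ℝ) ^ (-f (σ i)) else 0) :=
      Finset.prod_le_prod (fun i _ => norm_nonneg _) (fun i _ => hentry (σ i) i (l i))
    by_cases hbig : ∃ i : Fin N, 2 ≤ l i
    · obtain ⟨i0, hi0⟩ := hbig
      refine hstep.trans (le_trans (le_of_eq ?_) hpowS)
      apply Finset.prod_eq_zero (Finset.mem_univ i0)
      have h0 : l i0 ≠ 0 := by omega
      have h1 : l i0 ≠ 1 := by omega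
      simp [h0, h1]
    · push_neg at hbig
      set T : Finset (Fin N) := Finset.univ.filter (fun i => l i = 1) with hT
      have hcard : T.card = n := by
        have h1 : ∑ i ∈ T, l i = T.card := by
          rw [Finset.sum_congr rfl (fun i hi => (Finset.mem_filter.mp hi).2)]
          simp [hT]
        have h2 : ∑ i ∈ Finset.univ.filter (fun i => ¬ l i = 1), l i = 0 := by
          apply Finset.sum_eq_zero
          intro i hi
          have ha := (Finset.mem_filter.mp hi).2
          have hb := hbig i
          omega
        have h3 := Finset.sum_filter_add_sum_filter_not Finset.univ (fun i => l i = 1) l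
        rw [← hlsum, ← h3, h1, h2, add_zero]
      refine hstep.trans ?_
      have hprodT : ∏ i, (if l i = 0 then 1 else if l i = 1 then (p : ℝ) ^ (-f (σ i)) else 0)
          = ∏ i ∈ T, (p : ℝ) ^ (-f (σ i)) := by
        rw [← Finset.prod_filter_mul_prod_filter_not Finset.univ (fun i => l i = 1)]
        have hTc : ∏ i ∈ Finset.univ.filter (fun i => ¬ l i = 1),
            (if l i = 0 then 1 else if l i = 1 then (p : ℝ) ^ (-f (σ i)) else 0) = 1 := by
          apply Finset.prod_eq_one
          intro i hi
          have ha := (Finset.mem_filter.mp hi).2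
          have hb := hbig i
          have hc : l i = 0 := by omega
          simp [hc]
        rw [hTc, mul_one]
        apply Finset.prod_congr rfl
        intro i hi
        have ha := (Finset.mem_filter.mp hi).2
        simp [ha]
      rw [hprodT]
      have hsum : ∏ i ∈ T, (p : ℝ) ^ (-f (σ i)) = (p : ℝ) ^ (-∑ i ∈ T, f (σ i)) := by
        rw [← Finset.sum_neg_distrib, Real.rpow_sum_of_pos hp0]
      rw [hsum]
      apply Real.rpow_le_rpow_of_exponent_le hp1.le
      simp only [neg_le_neg_iff]
      have himg : ∑ i ∈ T, f (σ i) = ∑ j ∈ T.image σ, f j :=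
        (Finset.sum_image (fun a _ b _ h => σ.injective h)).symm
      rw [himg]
      exact hSle _ (by rw [Finset.card_image_of_injective _ σ.injective, hcard])
  rw [Matrix.det_apply, Polynomial.finset_sum_coeff]
  refine IsUltrametricDist.norm_sum_le_of_forall_le_of_nonneg hpowS ?_
  intro σ _
  rcases Int.units_eq_one_or (Equiv.Perm.sign σ) with h | h
  · rw [h, one_smul]; exact hperm σ
  · rw [h]
    have hneg : ((-1 : ℤˣ) • ∏ i, M (σ i) i) = -(∏ i, M (σ i) i) := by
      simp [Units.smul_def]
    rw [hneg, Polynomial.coeff_neg, norm_neg]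
    exact hperm σ
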